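/- For every real N > 0 and all real X, r, the series Σ_{n=0}^∞ (N^{n/2}/(2N)_n) · H_n^N(X√N) · r^n/n! converges and equals exp(rX) · j_{N-1/2}(r). -/

import Mathlib

open Finset Polynomial

/-- The relativistic Hermite polynomial `H_n^N(X)` (real parameter `N > 0`). -/
noncomputable def RH (n : ℕ) (N X : ℝ) : ℝ :=
  ((ascPochhammer ℝ n).eval (2 * N) / (2 * Real.sqrt N) ^ n) *
    ∑ k ∈ Finset.range (n / 2 + 1),
      (-1) ^ k / (ascPochhammer ℝ k).eval (N + 1 / 2) *
        ((n.factorial : ℝ) / (((n - 2 * k).factorial : ℝ) * (k.factorial : ℝ))) *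
        (2 * X / Real.sqrt N) ^ (n - 2 * k)

/-- The normalized Bessel function `j_ν(u) = Σ_k ((-1)^k/(k! (ν+1)_k)) (u/2)^(2k)`. -/
noncomputable def besselj (ν u : ℝ) : ℝ :=
  ∑' k : ℕ, (-1) ^ k / ((k.factorial : ℝ) * (ascPochhammer ℝ k).eval (ν + 1)) * (u / 2) ^ (2 * k)

noncomputable def bAux (N r : ℝ) (k : ℕ) : ℝ :=
  (-1) ^ k / ((k.factorial : ℝ) * (ascPochhammer ℝ k).eval (N + 1 / 2)) * (r / 2) ^ (2 * k)

noncomputable def cAux (X r : ℝ) (m : ℕ) : ℝ := (r * X) ^ m / (m.factorial : ℝ)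

noncomputable def BAux (N r : ℝ) (i : ℕ) : ℝ := if Even i then bAux N r (i / 2) else 0

lemma BAux_two_mul (N r : ℝ) (k : ℕ) : BAux N r (2 * k) = bAux N r k := by
  simp [BAux, Nat.mul_div_cancel_left k (by norm_num : 0 < 2)]

lemma BAux_odd (N r : ℝ) (i : ℕ) (h : ¬ Even i) : BAux N r i = 0 := by simp [BAux, h]

lemma poch_pos (N : ℝ) (hN : 0 < N) (k : ℕ) :
    0 < (ascPochhammer ℝ k).eval (N + 1 / 2) := ascPochhammer_pos _ _ (by linarith)

lemma poch_ge (N : ℝ) (hN : 0 < N) (k : ℕ) :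
    (2:ℝ)⁻¹ ^ k ≤ (ascPochhammer ℝ k).eval (N + 1 / 2) := by
  induction k with
  | zero => simp
  | succ k ih =>
    rw [ascPochhammer_succ_eval, pow_succ]
    have h1 : (2:ℝ)⁻¹ ≤ N + 1/2 + k := by
      have : (0:ℝ) ≤ k := Nat.cast_nonneg k
      linarith
    have h2 : (0:ℝ) < (2:ℝ)⁻¹ ^ k := by positivity
    calc (2:ℝ)⁻¹ ^ k * 2⁻¹ ≤ (ascPochhammer ℝ k).eval (N + 1/2) * (N + 1/2 + k) := by
          apply mul_le_mul ih h1 (by norm_num) (poch_pos N hN k).le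
      _ = _ := rfl

lemma bAux_summable_norm (N r : ℝ) (hN : 0 < N) :
    Summable fun k => ‖bAux N r k‖ := by
  apply Summable.of_nonneg_of_le (fun k => norm_nonneg _) _
    (Real.summable_pow_div_factorial (r ^ 2 / 2)).abs
  intro k
  have hp := poch_pos N hN k
  have hf : (0:ℝ) < (k.factorial : ℝ) := by positivity
  have h1 : ‖bAux N r k‖ = (r/2)^(2*k) / ((k.factorial : ℝ) * (ascPochhammer ℝ k).eval (N + 1/2)) := by
    rw [bAux, norm_mul, norm_div, Real.norm_eq_abs, Real.norm_eq_abs, Real.norm_eq_abs,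
      abs_pow, abs_neg, abs_one, one_pow, abs_of_pos (by positivity),
      abs_of_nonneg ((even_two_mul k).pow_nonneg _)]
    ring
  rw [h1]
  have h2 : (r/2)^(2*k) / ((k.factorial : ℝ) * (ascPochhammer ℝ k).eval (N + 1/2))
      ≤ (r/2)^(2*k) / ((k.factorial : ℝ) * (2:ℝ)⁻¹ ^ k) := by
    exact div_le_div_of_nonneg_left ((even_two_mul k).pow_nonneg _) (by positivity)
      (mul_le_mul_of_nonneg_left (poch_ge N hN k) hf.le)
  refine h2.trans (le_of_eq ?_)
  rw [abs_of_nonneg (by positivity), pow_mul, show ((r:ℝ)/2)^2 = r^2/4 by ring,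
    mul_comm ((k.factorial:ℝ)) _, ← div_div, ← div_pow]
  rw [show r^2/4/((2:ℝ))⁻¹ = r^2/2 by ring]

lemma cAux_summable_norm (X r : ℝ) : Summable fun m => ‖cAux X r m‖ := by
  have h := (Real.summable_pow_div_factorial |r * X|)
  apply Summable.of_nonneg_of_le (fun m => norm_nonneg _) _ h
  intro m
  rw [cAux, norm_div, Real.norm_eq_abs, Real.norm_eq_abs, abs_pow,
    abs_of_pos (by positivity : (0:ℝ) < (m.factorial : ℝ))]

lemma cAux_hasSum (X r : ℝ) : HasSum (cAux X r) (Real.exp (r * X)) := by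
  rw [Real.exp_eq_exp_ℝ]
  exact NormedSpace.expSeries_div_hasSum_exp (r * X)

lemma two_mul_injective : Function.Injective (fun k : ℕ => 2 * k) :=
  by intro a b h; simp only [] at h; omega

lemma BAux_summable_norm (N r : ℝ) (hN : 0 < N) :
    Summable fun i => ‖BAux N r i‖ := by
  rw [← Function.Injective.summable_iff two_mul_injective (f := fun i => ‖BAux N r i‖) ?_]
  · apply Summable.congr (bAux_summable_norm N r hN)
    intro k
    simp [Function.comp, BAux_two_mul]
  · intro i hi
    have : ¬ Even i := by
      simp only [Set.mem_range] at hi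
      rintro ⟨j, rfl⟩
      exact hi ⟨j, by omega⟩
    simp [BAux_odd N r i this]

lemma BAux_hasSum (N r : ℝ) (hN : 0 < N) :
    HasSum (BAux N r) (besselj (N - 1 / 2) r) := by
  have hzero : ∀ i ∉ Set.range (fun k : ℕ => 2 * k), BAux N r i = 0 := by
    intro i hi
    apply BAux_odd
    simp only [Set.mem_range] at hi
    rintro ⟨j, rfl⟩
    exact hi ⟨j, by omega⟩
  have hb : HasSum (bAux N r) (besselj (N - 1 / 2) r) := by
    have heq : besselj (N - 1 / 2) r = ∑' k, bAux N r k := by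
      rw [besselj, show N - 1/2 + 1 = N + 1/2 by ring]
      rfl
    rw [heq]
    exact (bAux_summable_norm N r hN).of_norm.hasSum
  rw [← Function.Injective.hasSum_iff two_mul_injective hzero]
  exact hb.congr_fun fun k => BAux_two_mul N r k

set_option maxHeartbeats 1000000 in
/-- Generating function:
`Σ_n (N^(n/2)/(2N)_n) H_n^N(X√N) r^n/n! = exp(rX) j_(N-1/2)(r)`. -/
theorem RH_bessel_generating_function (N : ℝ) (hN : 0 < N) (X r : ℝ) :
    HasSum (fun n : ℕ =>
        N ^ ((n : ℝ) / 2) / (ascPochhammer ℝ n).eval (2 * N) * RH n N (X * Real.sqrt N) *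
          r ^ n / (n.factorial : ℝ))
      (Real.exp (r * X) * besselj (N - 1 / 2) r) := by
  have hBn := BAux_summable_norm N r hN
  have hcn := cAux_summable_norm X r
  have hB := BAux_hasSum N r hN
  have hc := cAux_hasSum X r
  set f := fun n : ℕ => ∑ kl ∈ Finset.HasAntidiagonal.antidiagonal n, BAux N r kl.1 * cAux X r kl.2 with hf
  have hfsum : Summable f :=
    summable_sum_mul_antidiagonal_of_summable_mul (summable_mul_of_summable_norm hBn hcn)
  have hfs : HasSum f (Real.exp (r * X) * besselj (N - 1 / 2) r) := by
    have h1 := hfsum.hasSum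
    rwa [← tsum_mul_tsum_eq_tsum_sum_antidiagonal_of_summable_norm hBn hcn,
      hB.tsum_eq, hc.tsum_eq, mul_comm] at h1
  have hs0 : Real.sqrt N ≠ 0 := (Real.sqrt_pos.mpr hN).ne'
  have hkey : ∀ n : ℕ,
      N ^ ((n : ℝ) / 2) / (ascPochhammer ℝ n).eval (2 * N) * RH n N (X * Real.sqrt N) *
        r ^ n / (n.factorial : ℝ) = f n := by
    intro n
    rw [hf]
    simp only []
    rw [Finset.Nat.sum_antidiagonal_eq_sum_range_succ_mk]
    have hfilter : ∑ i ∈ range (n + 1), BAux N r i * cAux X r (n - i)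
        = ∑ i ∈ (range (n + 1)).filter (fun i => Even i), BAux N r i * cAux X r (n - i) := by
      refine (Finset.sum_filter_of_ne ?_).symm
      intro x _ hx
      by_contra hev
      exact hx (by rw [BAux_odd N r x hev, zero_mul])
    have himage : (range (n + 1)).filter (fun i => Even i)
        = (range (n / 2 + 1)).image (fun k => 2 * k) := by
      ext i
      simp only [mem_filter, mem_range, mem_image, Nat.even_iff]
      constructor
      · rintro ⟨hi, hev⟩; exact ⟨i / 2, by omega, by omega⟩
      · rintro ⟨j, hj, rfl⟩; omega
    rw [hfilter, himage, Finset.sum_image (by intro x _ y _ h; dsimp only at h; omega)]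
    have hNpow : N ^ ((n : ℝ) / 2) = (Real.sqrt N) ^ n := by
      rw [Real.sqrt_eq_rpow, ← Real.rpow_natCast (N ^ ((1:ℝ)/2)) n, ← Real.rpow_mul hN.le]
      congr 1
      ring
    have hPn : (ascPochhammer ℝ n).eval (2 * N) ≠ 0 :=
      (ascPochhammer_pos n (2 * N) (by linarith)).ne'
    have hfn : ((n.factorial : ℝ)) ≠ 0 := by positivity
    have h2n : ((2:ℝ)) ^ n ≠ 0 := by positivity
    rw [RH]
    have hXs : 2 * (X * Real.sqrt N) / Real.sqrt N = 2 * X := by field_simp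
    rw [hXs, hNpow]
    have hpre : ∀ S : ℝ,
        Real.sqrt N ^ n / (ascPochhammer ℝ n).eval (2 * N) *
          ((ascPochhammer ℝ n).eval (2 * N) / (2 * Real.sqrt N) ^ n * S) * r ^ n /
            (n.factorial : ℝ)
        = S * (r ^ n / (2 ^ n * (n.factorial : ℝ))) := by
      intro S
      rw [mul_pow]
      have hsn : Real.sqrt N ^ n ≠ 0 := pow_ne_zero n hs0
      field_simp
    rw [hpre]
    rw [Finset.sum_mul]
    refine Finset.sum_congr rfl ?_
    intro k hk
    have h2k : 2 * k ≤ n := by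
      simp only [mem_range] at hk; omega
    obtain ⟨m, rfl⟩ : ∃ m, n = 2 * k + m := ⟨n - 2 * k, by omega⟩
    rw [show 2 * k + m - 2 * k = m by omega]
    rw [BAux_two_mul, bAux, cAux]
    have hPk : (ascPochhammer ℝ k).eval (N + 1 / 2) ≠ 0 := (poch_pos N hN k).ne'
    have hfm : ((m.factorial : ℝ)) ≠ 0 := by positivity
    have hfk : ((k.factorial : ℝ)) ≠ 0 := by positivity
    rw [pow_add r (2*k) m, pow_add 2 (2*k) m, mul_pow 2 X m, mul_pow r X m, div_pow r 2 (2*k)]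
    have h2a : ((2:ℝ)) ^ (2*k) ≠ 0 := by positivity
    have h2b : ((2:ℝ)) ^ m ≠ 0 := by positivity
    have hfn' : (((k*2+m).factorial : ℝ)) ≠ 0 := by positivity
    have e2 : ((1:ℝ)/2)^m * (2:ℝ)^m = 1 := by rw [← mul_pow]; norm_num
    field_simp
  exact hfs.congr_fun fun n => hkey n
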